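/- Let $R$ be a Noetherian integral domain and $t \in R$ a nonzero element such that $tR$ is a prime ideal and the localization $R[t^{-1}]$ is integrally closed in the fraction field of $R$. Then $R$ is integrally closed in its fraction field. -/

import Mathlib

open Polynomial

/-- Key induction: if `x` in the fraction field is integral over `R` and
`t^n * x` is in (the image of) `R`, with `tR` prime, then `x ∈ R`. -/
lemma stmt16_key {R K : Type*} [CommRing R] [IsDomain R] [Field K] [Algebra R K]
    [IsFractionRing R K] (t : R) (ht : t ≠ 0)
    (hprime : (Ideal.span ({t} : Set R)).IsPrime) :
    ∀ (n : ℕ) (r : R) (x : K), IsIntegral R x →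
      algebraMap R K r = (algebraMap R K t) ^ n * x →
      ∃ y : R, algebraMap R K y = x := by
  intro n
  induction n with
  | zero =>
    intro r x _ h
    exact ⟨r, by simpa using h⟩
  | succ n ih =>
    intro r x hx h
    have inj : Function.Injective (algebraMap R K) := IsFractionRing.injective R K
    obtain ⟨p, hmonic, heval⟩ := id hx
    -- q has root `algebraMap R K (t^(n+1)) * x = algebraMap R K r`
    set q := p.scaleRoots (t ^ (n + 1)) with hq
    have hq0 : q.eval₂ (algebraMap R K) (algebraMap R K (t ^ (n + 1)) * x) = 0 := by
      apply Polynomial.scaleRoots_eval₂_eq_zero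
      simpa [Polynomial.aeval_def] using heval
    have hrx : algebraMap R K (t ^ (n + 1)) * x = algebraMap R K r := by
      rw [h, map_pow]
    rw [hrx, Polynomial.eval₂_hom] at hq0
    have hqr : q.eval r = 0 := by
      apply inj; simpa using hq0
    have hqmonic : q.Monic := (Polynomial.monic_scaleRoots_iff _).mpr hmonic
    set N := q.natDegree with hN
    have hNpos : 0 < N := by
      rcases Nat.eq_zero_or_pos N with h0 | h0
      · exfalso
        have hq1 : q = 1 := hqmonic.natDegree_eq_zero.mp h0
        rw [hq1] at hqr
        simp at hqr
      · exact h0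
    -- r^N ∈ span {t}
    have hsum : r ^ N = -∑ i ∈ Finset.range N, q.coeff i * r ^ i := by
      have h2 := Polynomial.eval_eq_sum_range (p := q) r
      rw [hqr, Finset.sum_range_succ, hqmonic.coeff_natDegree, one_mul] at h2
      exact eq_neg_of_add_eq_zero_right h2.symm
    have hmem : r ^ N ∈ Ideal.span ({t} : Set R) := by
      rw [hsum]
      apply neg_mem
      apply Ideal.sum_mem
      intro i hi
      have hdvd : t ∣ q.coeff i := by
        rw [hq, Polynomial.coeff_scaleRoots]
        have hlt : i < p.natDegree := by
          have h3 := Finset.mem_range.mp hi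
          rwa [hN, hq, Polynomial.natDegree_scaleRoots] at h3
        have h1 : t ∣ (t ^ (n + 1)) ^ (p.natDegree - i) := by
          rw [← pow_mul]
          exact dvd_pow_self t (Nat.mul_ne_zero (Nat.succ_ne_zero n)
            (Nat.sub_ne_zero_of_lt hlt))
        exact h1.mul_left _
      obtain ⟨c, hc⟩ := hdvd
      rw [hc, mul_assoc]
      exact Ideal.mul_mem_right _ _ (Ideal.subset_span rfl)
    have hr : r ∈ Ideal.span ({t} : Set R) := hprime.mem_of_pow_mem _ hmem
    obtain ⟨r', hr'⟩ := Ideal.mem_span_singleton'.mp hr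
    -- cancel one factor of t
    have htK : algebraMap R K t ≠ 0 := by
      simpa using (map_ne_zero_iff _ inj).mpr ht
    apply ih r' x hx
    have : algebraMap R K t * algebraMap R K r' =
        algebraMap R K t * ((algebraMap R K t) ^ n * x) := by
      rw [← map_mul, mul_comm t r', hr', h, pow_succ]
      ring
    exact mul_left_cancel₀ htK this

theorem stmt16 {R : Type*} [CommRing R] [IsDomain R] [IsNoetherianRing R]
    (t : R) (ht : t ≠ 0) (hprime : (Ideal.span ({t} : Set R)).IsPrime)
    (hloc : IsIntegrallyClosed (Localization.Away t)) :
    IsIntegrallyClosed R := by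
  have hle : Submonoid.powers t ≤ nonZeroDivisors R :=
    powers_le_nonZeroDivisors_of_noZeroDivisors ht
  letI : Algebra (Localization.Away t) (FractionRing R) :=
    IsLocalization.localizationAlgebraOfSubmonoidLe (Localization.Away t) (FractionRing R)
      (Submonoid.powers t) (nonZeroDivisors R) hle
  haveI : IsScalarTower R (Localization.Away t) (FractionRing R) :=
    IsLocalization.localization_isScalarTower_of_submonoid_le (Localization.Away t)
      (FractionRing R) _ _ hle
  haveI : IsFractionRing (Localization.Away t) (FractionRing R) :=
    IsFractionRing.isFractionRing_of_isDomain_of_isLocalization (Submonoid.powers t)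
      (Localization.Away t) (FractionRing R)
  rw [isIntegrallyClosed_iff (FractionRing R)]
  intro x hx
  have hxA : IsIntegral (Localization.Away t) x := hx.tower_top
  obtain ⟨a, ha⟩ := IsIntegrallyClosed.isIntegral_iff.mp hxA
  obtain ⟨⟨r, s⟩, hmk⟩ := IsLocalization.mk'_surjective (Submonoid.powers t) a
  dsimp only at hmk
  obtain ⟨n, hn⟩ := s.2
  apply stmt16_key t ht hprime n r x hx
  calc algebraMap R (FractionRing R) r
      = algebraMap (Localization.Away t) (FractionRing R) (algebraMap R (Localization.Away t) r) :=
        IsScalarTower.algebraMap_apply R _ _ r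
    _ = algebraMap (Localization.Away t) (FractionRing R)
          (IsLocalization.mk' (Localization.Away t) r s * algebraMap R (Localization.Away t) ↑s) :=
        by rw [IsLocalization.mk'_spec]
    _ = x * algebraMap R (FractionRing R) ↑s := by
        rw [map_mul, hmk, ha, ← IsScalarTower.algebraMap_apply]
    _ = (algebraMap R (FractionRing R) t) ^ n * x := by
        rw [← hn, map_pow]; ring
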